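/- Let G > 0 and s ≥ 0, let t₀ ∈ ℝ, and let a : [t₀,∞) → ℝ be differentiable with a(t) > 0 for all t and a(t) → ∞ as t → ∞. Suppose χ : [t₀,∞) → (0,∞) satisfies a'(t) − 2Gs/a(t)² = cosh(χ(t))/sinh(χ(t)) for all t ≥ t₀, and suppose S(t) = (π/G)·sinh²(χ(t))·a(t)² + 2π·(sinh(χ(t))·cosh(χ(t)) − χ(t))·s converges to a finite positive limit S_max as t → ∞. Then sinh(χ(t))·a(t) → √(G·S_max/π), χ(t) → 0, and a'(t)/a(t) → √(π/(G·S_max)) as t → ∞. -/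

import Mathlib

open Real Filter

/-- Cosmic no-hair theorem for open Robertson-Walker spacetimes. -/
theorem stmt_3 (G s t₀ Smax : ℝ) (hG : 0 < G) (hs : 0 ≤ s)
    (a χ : ℝ → ℝ)
    (ha_diff : ∀ t, t₀ ≤ t → DifferentiableAt ℝ a t)
    (ha_pos : ∀ t, t₀ ≤ t → 0 < a t)
    (ha_inf : Tendsto a atTop atTop)
    (hχ_pos : ∀ t, t₀ ≤ t → 0 < χ t)
    (hχ_eq : ∀ t, t₀ ≤ t →
      deriv a t - 2 * G * s / (a t) ^ 2 = Real.cosh (χ t) / Real.sinh (χ t))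
    (hSmax : 0 < Smax)
    (hS : Tendsto (fun t => (π / G) * (Real.sinh (χ t)) ^ 2 * (a t) ^ 2 +
        2 * π * (Real.sinh (χ t) * Real.cosh (χ t) - χ t) * s)
      atTop (nhds Smax)) :
    Tendsto (fun t => Real.sinh (χ t) * a t) atTop (nhds (Real.sqrt (G * Smax / π))) ∧
    Tendsto χ atTop (nhds 0) ∧
    Tendsto (fun t => deriv a t / a t) atTop (nhds (Real.sqrt (π / (G * Smax)))) := by
  have hπ : (0:ℝ) < π := Real.pi_pos
  have hev : ∀ᶠ t in atTop, t₀ ≤ t := eventually_ge_atTop t₀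
  -- second term nonneg
  have hterm2 : ∀ t, t₀ ≤ t → 0 ≤ 2 * π * (Real.sinh (χ t) * Real.cosh (χ t) - χ t) * s := by
    intro t ht
    have hx := hχ_pos t ht
    have h1 : χ t ≤ Real.sinh (χ t) * Real.cosh (χ t) := by
      nlinarith [Real.self_lt_sinh_iff.mpr hx, Real.one_le_cosh (χ t),
        Real.sinh_pos_iff.mpr hx]
    have : (0:ℝ) ≤ 2 * π := by positivity
    exact mul_nonneg (mul_nonneg this (by linarith)) hs
  -- eventual bound on sinh χ * a
  set C : ℝ := Real.sqrt (G / π * (Smax + 1)) with hC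
  have hCpos : 0 < C := Real.sqrt_pos.mpr (by positivity)
  have hbound : ∀ᶠ t in atTop, Real.sinh (χ t) * a t ≤ C := by
    have hSle : ∀ᶠ t in atTop, (π / G) * (Real.sinh (χ t)) ^ 2 * (a t) ^ 2 +
        2 * π * (Real.sinh (χ t) * Real.cosh (χ t) - χ t) * s ≤ Smax + 1 :=
      hS.eventually (eventually_le_nhds (by linarith))
    filter_upwards [hev, hSle] with t ht hle
    have h1 : (Real.sinh (χ t) * a t) ^ 2 ≤ C ^ 2 := by
      have hC2 : C ^ 2 = G / π * (Smax + 1) := Real.sq_sqrt (by positivity)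
      have := hterm2 t ht
      have hπG : 0 < π / G := by positivity
      rw [hC2]
      have key : π / G * (Real.sinh (χ t) * a t) ^ 2 ≤ Smax + 1 := by
        have hr : π / G * (Real.sinh (χ t) * a t) ^ 2 =
            π / G * (Real.sinh (χ t)) ^ 2 * (a t) ^ 2 := by ring
        linarith [hr.le, hr.ge]
      rw [div_mul_eq_mul_div, div_le_iff₀ hG] at key
      rw [div_mul_eq_mul_div, le_div_iff₀ hπ]
      nlinarith [key]
    have hpos : 0 < Real.sinh (χ t) * a t :=
      mul_pos (Real.sinh_pos_iff.mpr (hχ_pos t ht)) (ha_pos t ht)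
    nlinarith
  -- sinh χ → 0
  have hCa : Tendsto (fun t => C / a t) atTop (nhds 0) :=
    Tendsto.div_atTop tendsto_const_nhds ha_inf
  have hsinh0 : Tendsto (fun t => Real.sinh (χ t)) atTop (nhds 0) := by
    apply tendsto_of_tendsto_of_tendsto_of_le_of_le' tendsto_const_nhds hCa
    · filter_upwards [hev] with t ht
      exact (Real.sinh_pos_iff.mpr (hχ_pos t ht)).le
    · filter_upwards [hev, hbound] with t ht hb
      have hap := ha_pos t ht
      rw [le_div_iff₀ hap]
      exact hb
  -- χ → 0
  have hχ0 : Tendsto χ atTop (nhds 0) := by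
    apply tendsto_of_tendsto_of_tendsto_of_le_of_le' tendsto_const_nhds hsinh0
    · filter_upwards [hev] with t ht; exact (hχ_pos t ht).le
    · filter_upwards [hev] with t ht; exact (Real.self_lt_sinh_iff.mpr (hχ_pos t ht)).le
  have hcosh1 : Tendsto (fun t => Real.cosh (χ t)) atTop (nhds 1) := by
    have := (Real.continuous_cosh.tendsto 0).comp hχ0
    simpa [Function.comp_def] using this
  -- second term tends to 0
  have hterm2_0 : Tendsto (fun t => 2 * π * (Real.sinh (χ t) * Real.cosh (χ t) - χ t) * s)
      atTop (nhds 0) := by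
    have h := (((hsinh0.mul hcosh1).sub hχ0).const_mul (2 * π)).mul_const s
    simpa using h
  -- first term tends to Smax
  have hterm1 : Tendsto (fun t => (π / G) * (Real.sinh (χ t)) ^ 2 * (a t) ^ 2)
      atTop (nhds Smax) := by
    have h := hS.sub hterm2_0
    simpa using h
  -- (sinh χ * a)^2 → G Smax / π
  have hsq : Tendsto (fun t => (Real.sinh (χ t) * a t) ^ 2) atTop (nhds (G * Smax / π)) := by
    have h := hterm1.const_mul (G / π)
    have heq : ∀ t, (G / π) * ((π / G) * (Real.sinh (χ t)) ^ 2 * (a t) ^ 2) =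
        (Real.sinh (χ t) * a t) ^ 2 := by
      intro t; field_simp
    have heq2 : (G / π) * Smax = G * Smax / π := by ring
    rw [heq2] at h
    exact h.congr heq
  -- sinh χ * a → sqrt(G Smax / π)
  have hL : (0:ℝ) < Real.sqrt (G * Smax / π) := Real.sqrt_pos.mpr (by positivity)
  have hf : Tendsto (fun t => Real.sinh (χ t) * a t) atTop (nhds (Real.sqrt (G * Smax / π))) := by
    have h := (Real.continuous_sqrt.tendsto _).comp hsq
    apply h.congr'
    filter_upwards [hev] with t ht
    have hpos : 0 ≤ Real.sinh (χ t) * a t :=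
      (mul_pos (Real.sinh_pos_iff.mpr (hχ_pos t ht)) (ha_pos t ht)).le
    simp [Function.comp, Real.sqrt_sq hpos]
  refine ⟨hf, hχ0, ?_⟩
  -- deriv a / a
  have ha3 : Tendsto (fun t => 2 * G * s / (a t) ^ 3) atTop (nhds 0) :=
    Tendsto.div_atTop tendsto_const_nhds
      ((tendsto_pow_atTop (three_ne_zero)).comp ha_inf)
  have hmain : Tendsto (fun t => Real.cosh (χ t) / (Real.sinh (χ t) * a t) +
      2 * G * s / (a t) ^ 3) atTop (nhds (1 / Real.sqrt (G * Smax / π) + 0)) :=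
    (hcosh1.div hf hL.ne').add ha3
  have hfin : Tendsto (fun t => deriv a t / a t) atTop (nhds (1 / Real.sqrt (G * Smax / π))) := by
    rw [show (1 / Real.sqrt (G * Smax / π)) = 1 / Real.sqrt (G * Smax / π) + 0 by ring]
    apply hmain.congr'
    filter_upwards [hev] with t ht
    have hsp : Real.sinh (χ t) ≠ 0 := (Real.sinh_pos_iff.mpr (hχ_pos t ht)).ne'
    have hap : a t ≠ 0 := (ha_pos t ht).ne'
    have hd : deriv a t = Real.cosh (χ t) / Real.sinh (χ t) + 2 * G * s / (a t) ^ 2 := by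
      have := hχ_eq t ht; linarith
    rw [hd]
    field_simp
  have : Real.sqrt (π / (G * Smax)) = 1 / Real.sqrt (G * Smax / π) := by
    rw [one_div, ← Real.sqrt_inv, inv_div]
  rw [this]
  exact hfin
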